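/- Let n ≥ 2 and let U(u_n) be the universal enveloping algebra of the Lie algebra u_n. For every u ∈ u_n, the inner derivation ad(u) of the associative algebra U(u_n) (given by ad(u)(w) = uw − wu) is locally nilpotent: for every w ∈ U(u_n) there exists a natural number m with (ad u)^m(w) = 0. -/

import Mathlib

open MvPolynomial

noncomputable section


/-- If a derivation of `MvPolynomial σ K` maps every generator `X j`, `j ∈ s`, into the
subalgebra `supported K s` of polynomials supported on `s`, then it maps the whole of
`supported K s` into itself. -/
theorem Derivation.mem_supported_of_forall_mem
    {K : Type*} [CommRing K] {σ : Type*} (s : Set σ)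
    (D : Derivation K (MvPolynomial σ K) (MvPolynomial σ K))
    (h : ∀ j ∈ s, D (X j) ∈ supported K s)
    {p : MvPolynomial σ K} (hp : p ∈ supported K s) : D p ∈ supported K s := by
  rw [supported_eq_adjoin_X] at hp
  induction hp using Algebra.adjoin_induction with
  | mem x hx =>
    obtain ⟨j, hj, rfl⟩ := hx
    exact h j hj
  | algebraMap r =>
    rw [Derivation.map_algebraMap]
    exact zero_mem _
  | add x y hx hy ihx ihy =>
    rw [map_add]
    exact add_mem ihx ihy
  | mul x y hx hy ihx ihy =>
    rw [Derivation.leibniz, smul_eq_mul, smul_eq_mul]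
    rw [← supported_eq_adjoin_X] at hx hy
    exact add_mem (mul_mem hx ihy) (mul_mem hy ihx)

/-- If a derivation of `MvPolynomial σ K` kills every generator `X j`, `j ∈ s`, then it
kills the whole subalgebra `supported K s`. -/
theorem Derivation.eq_zero_of_forall_eq_zero
    {K : Type*} [CommRing K] {σ : Type*} (s : Set σ)
    (D : Derivation K (MvPolynomial σ K) (MvPolynomial σ K))
    (h : ∀ j ∈ s, D (X j) = 0)
    {p : MvPolynomial σ K} (hp : p ∈ supported K s) : D p = 0 := by
  rw [supported_eq_adjoin_X] at hp
  induction hp using Algebra.adjoin_induction with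
  | mem x hx =>
    obtain ⟨j, hj, rfl⟩ := hx
    exact h j hj
  | algebraMap r =>
    rw [Derivation.map_algebraMap]
  | add x y hx hy ihx ihy =>
    rw [map_add, ihx, ihy, add_zero]
  | mul x y hx hy ihx ihy =>
    rw [Derivation.leibniz, ihx, ihy, smul_zero, smul_zero, add_zero]

/-- The defining condition for the Lie algebra `u_n = K∂₁ ⊕ P₁∂₂ ⊕ ⋯ ⊕ P_{n-1}∂ₙ` of
triangular polynomial derivations of `P_n = K[x₁,…,xₙ]` (variables indexed by `Fin n`,
zero-based): a derivation `D` of `P_n` is triangular iff, for every `i`, the polynomial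
`D (X i)` only involves the variables `X j` with `j < i` (so the coefficient of `∂_i`
lies in `P_{i-1}`, where `P₀ = K`). -/
def triSet (K : Type*) [Field K] (n : ℕ) :
    Set (Derivation K (MvPolynomial (Fin n) K) (MvPolynomial (Fin n) K)) :=
  {D | ∀ i : Fin n, D (X i) ∈ supported K {j : Fin n | (j : ℕ) < (i : ℕ)}}

theorem supported_upward {K : Type*} [Field K] {n : ℕ}
    (p : MvPolynomial (Fin n) K) (s t : Set (Fin n)) (hst : s ⊆ t)
    (hp : p ∈ supported K s) : p ∈ supported K t :=
  supported_mono hst hp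

theorem triSet_stable {K : Type*} [Field K] {n : ℕ}
    {D : Derivation K (MvPolynomial (Fin n) K) (MvPolynomial (Fin n) K)}
    (hD : D ∈ triSet K n) (i : Fin n) :
    ∀ j ∈ {j' : Fin n | (j' : ℕ) < (i : ℕ)},
      D (X j) ∈ supported K {j' : Fin n | (j' : ℕ) < (i : ℕ)} := by
  intro j hj
  refine supported_upward _ {j' : Fin n | (j' : ℕ) < (j : ℕ)} _ ?_ (hD j)
  intro l hl
  have hl' : (l : ℕ) < (j : ℕ) := hl
  have hj' : (j : ℕ) < (i : ℕ) := hj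
  exact lt_trans hl' hj'

theorem triSet_lie {K : Type*} [Field K] {n : ℕ}
    {a b : Derivation K (MvPolynomial (Fin n) K) (MvPolynomial (Fin n) K)}
    (ha : a ∈ triSet K n) (hb : b ∈ triSet K n) : ⁅a, b⁆ ∈ triSet K n := by
  intro i
  rw [Derivation.commutator_apply]
  exact sub_mem
    (Derivation.mem_supported_of_forall_mem _ a (triSet_stable ha i) (hb i))
    (Derivation.mem_supported_of_forall_mem _ b (triSet_stable hb i) (ha i))

/-- The Lie algebra `u_n = K∂₁ ⊕ P₁∂₂ ⊕ ⋯ ⊕ P_{n-1}∂ₙ` of triangular polynomial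
derivations, as a Lie subalgebra of the Lie algebra of all `K`-derivations of the
polynomial algebra `P_n = K[x₁,…,xₙ]`. -/
def triangular (K : Type*) [Field K] (n : ℕ) :
    LieSubalgebra K (Derivation K (MvPolynomial (Fin n) K) (MvPolynomial (Fin n) K)) where
  carrier := triSet K n
  add_mem' := fun {a b} ha hb i => by
    rw [Derivation.add_apply]; exact add_mem (ha i) (hb i)
  zero_mem' := fun i => by
    rw [Derivation.zero_apply]; exact zero_mem _
  smul_mem' := fun c a ha i => by
    rw [Derivation.smul_apply]; exact Subalgebra.smul_mem _ (ha i) c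
  lie_mem' := fun {a b} ha hb => triSet_lie ha hb

theorem mem_triangular_iff {K : Type*} [Field K] {n : ℕ}
    (D : Derivation K (MvPolynomial (Fin n) K) (MvPolynomial (Fin n) K)) :
    D ∈ triangular K n ↔
      ∀ i : Fin n, D (X i) ∈ supported K {j : Fin n | (j : ℕ) < (i : ℕ)} := Iff.rfl

namespace TriangularNilpotent

variable {K : Type*} [Field K] {n : ℕ}

/-- Weighted degree of an exponent vector. -/
def wdeg (w : Fin n → ℕ) (α : Fin n →₀ ℕ) : ℕ := α.sum fun j k => k * w j

theorem wdeg_add (w : Fin n → ℕ) (α β : Fin n →₀ ℕ) :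
    wdeg w (α + β) = wdeg w α + wdeg w β :=
  Finsupp.sum_add_index' (fun _ => by simp) (fun _ _ _ => add_mul _ _ _)

theorem wdeg_single (w : Fin n → ℕ) (j : Fin n) (k : ℕ) :
    wdeg w (Finsupp.single j k) = k * w j :=
  Finsupp.sum_single_index (by simp)

/-- All monomials of `p` have weighted degree at most `a`. -/
def Bdd (w : Fin n → ℕ) (p : MvPolynomial (Fin n) K) (a : ℤ) : Prop :=
  ∀ α ∈ p.support, (wdeg w α : ℤ) ≤ a

theorem Bdd.mono {w : Fin n → ℕ} {p : MvPolynomial (Fin n) K} {a b : ℤ}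
    (hab : a ≤ b) (h : Bdd w p a) : Bdd w p b :=
  fun α hα => (h α hα).trans hab

theorem bdd_zero (w : Fin n → ℕ) (a : ℤ) : Bdd w (0 : MvPolynomial (Fin n) K) a := by
  intro α hα; simp at hα

theorem Bdd.add {w : Fin n → ℕ} {p q : MvPolynomial (Fin n) K} {a : ℤ}
    (hp : Bdd w p a) (hq : Bdd w q a) : Bdd w (p + q) a := by
  intro α hα
  rcases Finset.mem_union.1 (MvPolynomial.support_add hα) with h | h
  · exact hp α h
  · exact hq α h

theorem Bdd.neg {w : Fin n → ℕ} {p : MvPolynomial (Fin n) K} {a : ℤ}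
    (hp : Bdd w p a) : Bdd w (-p) a := by
  intro α hα
  exact hp α (by simpa using hα)

theorem Bdd.sub {w : Fin n → ℕ} {p q : MvPolynomial (Fin n) K} {a : ℤ}
    (hp : Bdd w p a) (hq : Bdd w q a) : Bdd w (p - q) a := by
  rw [sub_eq_add_neg]; exact hp.add hq.neg

theorem Bdd.smul {S : Type*} [SMulZeroClass S K] {w : Fin n → ℕ}
    {p : MvPolynomial (Fin n) K} {a : ℤ} (c : S) (hp : Bdd w p a) :
    Bdd w (c • p) a :=
  fun α hα => hp α (MvPolynomial.support_smul hα)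

theorem Bdd.mul {w : Fin n → ℕ} {p q : MvPolynomial (Fin n) K} {a b : ℤ}
    (hp : Bdd w p a) (hq : Bdd w q b) : Bdd w (p * q) (a + b) := by
  intro α hα
  have h := MvPolynomial.support_mul p q hα
  rcases Finset.mem_add.1 h with ⟨β, hβ, γ, hγ, rfl⟩
  rw [wdeg_add]
  push_cast
  exact add_le_add (hp β hβ) (hq γ hγ)

theorem Bdd.sum {w : Fin n → ℕ} {ι : Type*} {s : Finset ι}
    {f : ι → MvPolynomial (Fin n) K} {a : ℤ} (h : ∀ i ∈ s, Bdd w (f i) a) :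
    Bdd w (∑ i ∈ s, f i) a :=
  Finset.sum_induction f (fun p => Bdd w p a) (fun _ _ => Bdd.add) (bdd_zero w a) h

theorem bdd_monomial {w : Fin n → ℕ} (α : Fin n →₀ ℕ) (c : K) :
    Bdd w (MvPolynomial.monomial α c) (wdeg w α) := by
  intro β hβ
  have := MvPolynomial.support_monomial_subset hβ
  rw [Finset.mem_singleton] at this
  subst this; rfl

theorem bdd_deriv_monomial (w : Fin n → ℕ)
    (D : Derivation K (MvPolynomial (Fin n) K) (MvPolynomial (Fin n) K)) (e : ℤ)
    (hD : ∀ j, Bdd w (D (MvPolynomial.X j)) (e + w j)) (α : Fin n →₀ ℕ) :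
    Bdd w (D (MvPolynomial.monomial α (1 : K))) (e + wdeg w α) := by
  induction α using Finsupp.induction with
  | zero =>
    have h1 : (MvPolynomial.monomial (0 : Fin n →₀ ℕ) (1 : K)) = 1 := by
      rw [MvPolynomial.monomial_zero', MvPolynomial.C_1]
    rw [h1, Derivation.map_one_eq_zero]
    exact bdd_zero w _
  | single_add j k f hjf hk ih =>
    have hk1 : 1 ≤ k := Nat.one_le_iff_ne_zero.mpr hk
    have hmono : (MvPolynomial.monomial (Finsupp.single j k + f) (1 : K)) =
        MvPolynomial.X j ^ k * MvPolynomial.monomial f 1 := by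
      rw [MvPolynomial.X_pow_eq_monomial, MvPolynomial.monomial_mul, one_mul]
    have hXpow : Bdd w (D (MvPolynomial.X j ^ k)) (e + ((k * w j : ℕ) : ℤ)) := by
      rw [Derivation.leibniz_pow]
      refine Bdd.smul k ?_
      rw [smul_eq_mul]
      have h1 : Bdd w ((MvPolynomial.X j : MvPolynomial (Fin n) K) ^ (k - 1))
          (((k - 1 : ℕ) : ℤ) * w j) := by
        rw [MvPolynomial.X_pow_eq_monomial]
        have h2 := bdd_monomial (w := w) (Finsupp.single j (k - 1)) (1 : K)
        rwa [wdeg_single, Nat.cast_mul] at h2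
      refine (h1.mul (hD j)).mono (le_of_eq ?_)
      push_cast [Nat.cast_sub hk1]
      ring
    rw [hmono, Derivation.leibniz]
    rw [wdeg_add, wdeg_single]
    have t1 : Bdd w ((MvPolynomial.X j ^ k : MvPolynomial (Fin n) K) •
        D (MvPolynomial.monomial f 1)) (((k * w j : ℕ) : ℤ) + (e + wdeg w f)) := by
      rw [smul_eq_mul]
      refine Bdd.mul ?_ ih
      rw [MvPolynomial.X_pow_eq_monomial]
      have h2 := bdd_monomial (w := w) (Finsupp.single j k) (1 : K)
      rwa [wdeg_single] at h2
    have t2 : Bdd w ((MvPolynomial.monomial f (1 : K)) • D (MvPolynomial.X j ^ k))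
        (((wdeg w f : ℕ) : ℤ) + (e + ((k * w j : ℕ) : ℤ))) := by
      rw [smul_eq_mul]
      exact (bdd_monomial f 1).mul hXpow
    exact (t1.mono (by omega)).add (t2.mono (by omega))

theorem bdd_deriv (w : Fin n → ℕ)
    (D : Derivation K (MvPolynomial (Fin n) K) (MvPolynomial (Fin n) K)) (e : ℤ)
    (hD : ∀ j, Bdd w (D (MvPolynomial.X j)) (e + w j))
    {p : MvPolynomial (Fin n) K} {a : ℤ} (hp : Bdd w p a) : Bdd w (D p) (a + e) := by
  rw [p.as_sum, map_sum]
  refine Bdd.sum ?_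
  intro α hα
  have hmono : (MvPolynomial.monomial α (MvPolynomial.coeff α p)) =
      (MvPolynomial.coeff α p) • MvPolynomial.monomial α (1 : K) := by
    rw [MvPolynomial.smul_monomial, smul_eq_mul, mul_one]
  rw [hmono, D.map_smul]
  refine Bdd.smul _ ((bdd_deriv_monomial w D e hD α).mono ?_)
  have := hp α hα
  omega

end TriangularNilpotent

namespace TriangularNilpotent

variable {K : Type*} [Field K] {n : ℕ}

/-- For a triangular derivation `u` one can choose weights making `u` strictly
weight-decreasing. -/
theorem triangular_weight (u : ↥(triangular K n)) :
    ∃ w : Fin n → ℕ, (∃ W : ℕ, ∀ i, 1 ≤ w i ∧ w i ≤ W) ∧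
      ∀ i, Bdd w ((u : Derivation K (MvPolynomial (Fin n) K) (MvPolynomial (Fin n) K))
        (MvPolynomial.X i)) (-1 + w i) := by
  classical
  set D := (u : Derivation K (MvPolynomial (Fin n) K) (MvPolynomial (Fin n) K))
  set d := Finset.univ.sup (fun i : Fin n => (D (MvPolynomial.X i)).totalDegree) with hd
  refine ⟨fun i => (d + 1) ^ ((i : ℕ) + 1), ⟨(d + 1) ^ (n + 1), fun i => ⟨Nat.one_le_pow _ _ (by omega), Nat.pow_le_pow_right (by omega) (by omega)⟩⟩, ?_⟩
  intro i α hα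
  have hvars : ∀ j ∈ α.support, (j : ℕ) < (i : ℕ) := by
    intro j hj
    have hmem : (u : Derivation K (MvPolynomial (Fin n) K) (MvPolynomial (Fin n) K))
        (MvPolynomial.X i) ∈ MvPolynomial.supported K {j' : Fin n | (j' : ℕ) < (i : ℕ)} :=
      u.2 i
    have hv : j ∈ (D (MvPolynomial.X i)).vars :=
      (MvPolynomial.mem_vars j).mpr ⟨α, hα, hj⟩
    exact (MvPolynomial.mem_supported.mp hmem) hv
  have hdeg : (∑ j ∈ α.support, α j) ≤ d := by
    have h1 : α.sum (fun _ k => k) ≤ (D (MvPolynomial.X i)).totalDegree :=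
      MvPolynomial.le_totalDegree hα
    have h2 : (D (MvPolynomial.X i)).totalDegree ≤ d := by
      rw [hd]
      exact Finset.le_sup (f := fun i : Fin n => (D (MvPolynomial.X i)).totalDegree)
        (Finset.mem_univ i)
    exact le_trans h1 h2
  have key : wdeg (fun i : Fin n => (d + 1) ^ ((i : ℕ) + 1)) α < (d + 1) ^ ((i : ℕ) + 1) := by
    have hp : 0 < (d + 1) ^ (i : ℕ) := Nat.pow_pos (by omega)
    calc wdeg (fun i : Fin n => (d + 1) ^ ((i : ℕ) + 1)) α
        ≤ ∑ j ∈ α.support, α j * (d + 1) ^ (i : ℕ) := by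
          refine Finset.sum_le_sum ?_
          intro j hj
          exact Nat.mul_le_mul_left _ (Nat.pow_le_pow_right (by omega) (hvars j hj))
      _ = (∑ j ∈ α.support, α j) * (d + 1) ^ (i : ℕ) := (Finset.sum_mul ..).symm
      _ ≤ d * (d + 1) ^ (i : ℕ) := Nat.mul_le_mul_right _ hdeg
      _ < (d + 1) ^ ((i : ℕ) + 1) := by
          rw [pow_succ]
          nlinarith
  show (wdeg (fun i : Fin n => (d + 1) ^ ((i : ℕ) + 1)) α : ℤ) ≤
    -1 + ((d + 1) ^ ((i : ℕ) + 1) : ℕ)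
  omega

/-- Boundedness property of a triangular derivation relative to weights `w`. -/
def VP (w : Fin n → ℕ) (c : ℤ) (v : ↥(triangular K n)) : Prop :=
  ∀ i, Bdd w ((v : Derivation K (MvPolynomial (Fin n) K) (MvPolynomial (Fin n) K))
    (MvPolynomial.X i)) (c + w i)

theorem VP.bracket {w : Fin n → ℕ} {u v : ↥(triangular K n)}
    (hu : ∀ j, Bdd w ((u : Derivation K (MvPolynomial (Fin n) K) (MvPolynomial (Fin n) K))
      (MvPolynomial.X j)) (-1 + w j))
    {c : ℤ} (hv : VP w c v) : VP w (c - 1) ⁅u, v⁆ := by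
  intro i
  have hco : ((⁅u, v⁆ : ↥(triangular K n)) :
      Derivation K (MvPolynomial (Fin n) K) (MvPolynomial (Fin n) K)) = ⁅(u :
      Derivation K (MvPolynomial (Fin n) K) (MvPolynomial (Fin n) K)), (v :
      Derivation K (MvPolynomial (Fin n) K) (MvPolynomial (Fin n) K))⁆ := rfl
  rw [hco, Derivation.commutator_apply]
  have t1 := bdd_deriv w _ (-1) hu (hv i)
  have t2 := bdd_deriv w _ c (fun j => hv j) (hu i)
  exact (t1.mono (by omega)).sub (t2.mono (by omega))

theorem vp_exists (w : Fin n → ℕ) (v : ↥(triangular K n)) :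
    ∃ c : ℕ, VP w (c : ℤ) v := by
  classical
  refine ⟨Finset.univ.sup (fun i : Fin n =>
    ((v : Derivation K (MvPolynomial (Fin n) K) (MvPolynomial (Fin n) K))
      (MvPolynomial.X i)).support.sup (wdeg w)), ?_⟩
  intro i α hα
  have h1 : wdeg w α ≤ ((v : Derivation K (MvPolynomial (Fin n) K) (MvPolynomial (Fin n) K))
      (MvPolynomial.X i)).support.sup (wdeg w) := Finset.le_sup hα
  have h2 : ((v : Derivation K (MvPolynomial (Fin n) K) (MvPolynomial (Fin n) K))
      (MvPolynomial.X i)).support.sup (wdeg w) ≤ Finset.univ.sup (fun i : Fin n =>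
    ((v : Derivation K (MvPolynomial (Fin n) K) (MvPolynomial (Fin n) K))
      (MvPolynomial.X i)).support.sup (wdeg w)) :=
    Finset.le_sup (f := fun i : Fin n =>
      ((v : Derivation K (MvPolynomial (Fin n) K) (MvPolynomial (Fin n) K))
        (MvPolynomial.X i)).support.sup (wdeg w)) (Finset.mem_univ i)
  have h3 : (0 : ℤ) ≤ (w i : ℤ) := by positivity
  omega

theorem vp_zero {w : Fin n → ℕ} {c : ℤ} {v : ↥(triangular K n)}
    (hc : ∀ i, c + (w i : ℤ) < 0) (hv : VP w c v) : v = 0 := by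
  have hval : ∀ i, (v : Derivation K (MvPolynomial (Fin n) K) (MvPolynomial (Fin n) K))
      (MvPolynomial.X i) = 0 := by
    intro i
    rw [← MvPolynomial.support_eq_empty]
    refine Finset.eq_empty_of_forall_notMem ?_
    intro α hα
    have := hv i α hα
    have h0 : (0 : ℤ) ≤ (wdeg w α : ℤ) := by positivity
    have := hc i
    omega
  apply Subtype.ext
  rw [ZeroMemClass.coe_zero]
  exact MvPolynomial.derivation_ext fun i => by rw [hval i]; simp

theorem bracket_iter_zero (u v : ↥(triangular K n)) :
    ∃ m : ℕ, (fun x : ↥(triangular K n) => ⁅u, x⁆)^[m] v = 0 := by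
  obtain ⟨w, ⟨W, hW⟩, hu⟩ := triangular_weight u
  obtain ⟨c₀, hc₀⟩ := vp_exists w v
  have key : ∀ m : ℕ, VP w ((c₀ : ℤ) - m) ((fun x : ↥(triangular K n) => ⁅u, x⁆)^[m] v) := by
    intro m
    induction m with
    | zero => simpa using hc₀
    | succ m ih =>
      rw [Function.iterate_succ_apply']
      have h := VP.bracket hu ih
      have hcast : (c₀ : ℤ) - ((m : ℕ) + 1 : ℕ) = (c₀ : ℤ) - m - 1 := by push_cast; ring
      rw [hcast]
      exact h
  refine ⟨c₀ + W + 1, vp_zero ?_ (key (c₀ + W + 1))⟩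
  intro i
  have := (hW i).2
  push_cast
  omega

end TriangularNilpotent

namespace TriangularNilpotent

theorem pow_apply_zero_of_le {R A : Type*} [CommRing R] [Ring A] [Algebra R A]
    {f : Module.End R A} {z : A} {m k : ℕ} (hmk : m ≤ k) (h : (f ^ m) z = 0) :
    (f ^ k) z = 0 := by
  rw [← Nat.sub_add_cancel hmk, pow_add, Module.End.mul_apply, h, map_zero]

theorem inner_pow_mul_eq_zero {R A : Type*} [CommRing R] [Ring A] [Algebra R A] (a : A)
    {x y : A} {p q : ℕ}
    (hx : (((LinearMap.mulLeft R a - LinearMap.mulRight R a) : Module.End R A) ^ p) x = 0)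
    (hy : (((LinearMap.mulLeft R a - LinearMap.mulRight R a) : Module.End R A) ^ q) y = 0) :
    (((LinearMap.mulLeft R a - LinearMap.mulRight R a) : Module.End R A) ^ (p + q)) (x * y)
      = 0 := by
  set f : Module.End R A := LinearMap.mulLeft R a - LinearMap.mulRight R a with hf
  have f_apply : ∀ z : A, f z = a * z - z * a := fun z => by
    simp [hf, LinearMap.sub_apply, LinearMap.mulLeft_apply, LinearMap.mulRight_apply]
  have f_mul : ∀ z₁ z₂ : A, f (z₁ * z₂) = f z₁ * z₂ + z₁ * f z₂ := by
    intro z₁ z₂; simp only [f_apply]; noncomm_ring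
  have key : ∀ m i j : ℕ, p + q ≤ i + j + m → (f ^ m) ((f ^ i) x * (f ^ j) y) = 0 := by
    intro m
    induction m with
    | zero =>
      intro i j h
      rcases le_or_gt p i with hi | hi
      · rw [pow_zero, Module.End.one_apply, pow_apply_zero_of_le hi hx, zero_mul]
      · rw [pow_zero, Module.End.one_apply, pow_apply_zero_of_le (by omega) hy, mul_zero]
    | succ m ih =>
      intro i j h
      rw [pow_succ, Module.End.mul_apply, f_mul]
      have e1 : f ((f ^ i) x) = (f ^ (i + 1)) x := by rw [pow_succ', Module.End.mul_apply]
      have e2 : f ((f ^ j) y) = (f ^ (j + 1)) y := by rw [pow_succ', Module.End.mul_apply]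
      rw [e1, e2, map_add, ih (i + 1) j (by omega), ih i (j + 1) (by omega), add_zero]
  have := key (p + q) 0 0 (by omega)
  simpa using this

/-- In the universal enveloping algebra of a Lie algebra `L`, the inner derivation
associated to `ι u` is locally nilpotent as soon as `ad u` is locally nilpotent on `L`. -/
theorem uea_ad_locally_nilpotent {R : Type*} [CommRing R] {L : Type*} [LieRing L]
    [LieAlgebra R L] (u : L)
    (hu : ∀ x : L, ∃ m : ℕ, (fun z : L => ⁅u, z⁆)^[m] x = 0)
    (w : UniversalEnvelopingAlgebra R L) :
    ∃ m : ℕ,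
      (((LinearMap.mulLeft R (UniversalEnvelopingAlgebra.ι R u) -
          LinearMap.mulRight R (UniversalEnvelopingAlgebra.ι R u)) :
        Module.End R (UniversalEnvelopingAlgebra R L)) ^ m) w = 0 := by
  set f : Module.End R (UniversalEnvelopingAlgebra R L) :=
    LinearMap.mulLeft R (UniversalEnvelopingAlgebra.ι R u) -
      LinearMap.mulRight R (UniversalEnvelopingAlgebra.ι R u) with hf
  have f_apply : ∀ z : UniversalEnvelopingAlgebra R L,
      f z = UniversalEnvelopingAlgebra.ι R u * z - z * UniversalEnvelopingAlgebra.ι R u :=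
    fun z => by
      simp [hf, LinearMap.sub_apply, LinearMap.mulLeft_apply, LinearMap.mulRight_apply]
  have f_iota : ∀ x : L,
      f (UniversalEnvelopingAlgebra.ι R x) = UniversalEnvelopingAlgebra.ι R ⁅u, x⁆ := by
    intro x
    letI : LieRing (UniversalEnvelopingAlgebra R L) := LieRing.ofAssociativeRing
    rw [f_apply, ← Ring.lie_def, ← LieHom.map_lie (UniversalEnvelopingAlgebra.ι R)]
  have f_pow_iota : ∀ (m : ℕ) (x : L),
      (f ^ m) (UniversalEnvelopingAlgebra.ι R x) =
        UniversalEnvelopingAlgebra.ι R ((fun z : L => ⁅u, z⁆)^[m] x) := by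
    intro m
    induction m with
    | zero => intro x; simp
    | succ m ih =>
      intro x
      rw [pow_succ, Module.End.mul_apply, f_iota, ih, Function.iterate_succ_apply]
  have hsurj : Function.Surjective (UniversalEnvelopingAlgebra.mkAlgHom R L) :=
    RingCon.mkₐ_surjective (α := R) _
  obtain ⟨t, rfl⟩ := hsurj w
  induction t using TensorAlgebra.induction with
  | algebraMap r =>
    refine ⟨1, ?_⟩
    rw [pow_one, AlgHom.commutes, f_apply, sub_eq_zero]
    exact (Algebra.commutes r _).symm
  | ι x =>
    obtain ⟨m, hm⟩ := hu x
    refine ⟨m, ?_⟩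
    have hx : UniversalEnvelopingAlgebra.mkAlgHom R L (TensorAlgebra.ι R x) =
        UniversalEnvelopingAlgebra.ι R x := (UniversalEnvelopingAlgebra.ι_apply R x).symm
    rw [hx, f_pow_iota, hm, map_zero]
  | mul x y ihx ihy =>
    obtain ⟨p, hp⟩ := ihx
    obtain ⟨q, hq⟩ := ihy
    refine ⟨p + q, ?_⟩
    rw [map_mul]
    exact inner_pow_mul_eq_zero _ hp hq
  | add x y ihx ihy =>
    obtain ⟨p, hp⟩ := ihx
    obtain ⟨q, hq⟩ := ihy
    refine ⟨p + q, ?_⟩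
    rw [map_add, map_add, pow_apply_zero_of_le (Nat.le_add_right p q) hp,
      pow_apply_zero_of_le (Nat.le_add_left q p) hq, add_zero]

end TriangularNilpotent

set_option maxHeartbeats 1000000 in
/-- For `n ≥ 2` and `u ∈ u_n`, the inner derivation `ad u : w ↦ uw - wu`
of the universal enveloping algebra `U(u_n)` is locally nilpotent. -/
theorem triangular_uea_ad_locally_nilpotent
    (K : Type*) [Field K] [CharZero K] (n : ℕ) (hn : 2 ≤ n)
    (u : ↥(triangular K n)) (w : UniversalEnvelopingAlgebra K ↥(triangular K n)) :
    ∃ m : ℕ,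
      (((LinearMap.mulLeft K (UniversalEnvelopingAlgebra.ι K u) -
          LinearMap.mulRight K (UniversalEnvelopingAlgebra.ι K u)) :
        Module.End K (UniversalEnvelopingAlgebra K ↥(triangular K n))) ^ m) w = 0 :=
  TriangularNilpotent.uea_ad_locally_nilpotent u
    (fun x => TriangularNilpotent.bracket_iter_zero u x) w
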